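/- For a real random variable X and η ≠ 0, if E[exp(η² X²)] is finite then the extended characteristic function ζ ↦ E[exp(i ζ X)] is well-defined on all of ℂ and satisfies |E[exp(i ζ X)]| ≤ exp(η⁻² |ζ|²) · E[exp(η² X²)]. -/

import Mathlib

open MeasureTheory Complex

theorem charFun_complex_welldefined_and_bound
    (μ : Measure ℝ) [IsProbabilityMeasure μ] (η : ℝ) (hη : η ≠ 0)
    (hint : Integrable (fun x : ℝ => Real.exp (η ^ 2 * x ^ 2)) μ) :
    ∀ ζ : ℂ, Integrable (fun x : ℝ => Complex.exp (I * ζ * x)) μ ∧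
      ‖∫ x : ℝ, Complex.exp (I * ζ * x) ∂μ‖ ≤
        Real.exp (η ^ (-2 : ℤ) * ‖ζ‖ ^ 2) *
          ∫ x : ℝ, Real.exp (η ^ 2 * x ^ 2) ∂μ := by
  intro ζ
  have hz : (η : ℝ) ^ (-2 : ℤ) = (η ^ 2)⁻¹ := by
    rw [zpow_neg]; norm_cast
  have hη2 : (0:ℝ) < η ^ 2 := by positivity
  -- pointwise bound
  have key : ∀ x : ℝ, ‖Complex.exp (I * ζ * x)‖ ≤
      Real.exp (η ^ (-2 : ℤ) * ‖ζ‖ ^ 2) * Real.exp (η ^ 2 * x ^ 2) := by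
    intro x
    have hre : (I * ζ * (x:ℂ)).re = -ζ.im * x := by simp [mul_comm]
    rw [Complex.norm_exp, hre, ← Real.exp_add]
    apply Real.exp_le_exp.mpr
    have h1 : -ζ.im * x ≤ ‖ζ‖ * |x| := by
      calc -ζ.im * x ≤ |(-ζ.im) * x| := le_abs_self _
        _ = |ζ.im| * |x| := by rw [abs_mul, abs_neg]
        _ ≤ ‖ζ‖ * |x| := by
            gcongr; exact Complex.abs_im_le_norm ζ
    have h2 : ‖ζ‖ * |x| ≤ (η^2)⁻¹ * ‖ζ‖ ^ 2 + η ^ 2 * x ^ 2 := by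
      have ab : ‖ζ‖ * |x| = (‖ζ‖ / |η|) * (|η| * |x|) := by
        field_simp
      have h2m := two_mul_le_add_sq (‖ζ‖ / |η|) (|η| * |x|)
      have e1 : (‖ζ‖ / |η|) ^ 2 = (η ^ 2)⁻¹ * ‖ζ‖ ^ 2 := by
        rw [div_pow, _root_.sq_abs]; ring
      have e2 : (|η| * |x|) ^ 2 = η ^ 2 * x ^ 2 := by
        rw [mul_pow, _root_.sq_abs, _root_.sq_abs]
      have h0 : 0 ≤ ‖ζ‖ * |x| := by positivity
      rw [ab]
      rw [ab] at h0
      linarith [h2m, e1, e2]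
    rw [hz]
    linarith
  have hmeas : AEStronglyMeasurable (fun x : ℝ => Complex.exp (I * ζ * x)) μ := by
    apply Continuous.aestronglyMeasurable
    continuity
  have hintg : Integrable (fun x : ℝ =>
      Real.exp (η ^ (-2 : ℤ) * ‖ζ‖ ^ 2) * Real.exp (η ^ 2 * x ^ 2)) μ :=
    hint.const_mul _
  have hInt : Integrable (fun x : ℝ => Complex.exp (I * ζ * x)) μ := by
    refine hintg.mono hmeas (Filter.Eventually.of_forall fun x => ?_)
    refine (key x).trans (le_of_eq ?_)
    rw [Real.norm_eq_abs, _root_.abs_of_nonneg (by positivity)]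
  refine ⟨hInt, ?_⟩
  calc ‖∫ x : ℝ, Complex.exp (I * ζ * x) ∂μ‖
      ≤ ∫ x : ℝ, ‖Complex.exp (I * ζ * x)‖ ∂μ := by
        exact norm_integral_le_integral_norm _
    _ ≤ ∫ x : ℝ, Real.exp (η ^ (-2 : ℤ) * ‖ζ‖ ^ 2) * Real.exp (η ^ 2 * x ^ 2) ∂μ := by
        refine integral_mono hInt.norm hintg key
    _ = Real.exp (η ^ (-2 : ℤ) * ‖ζ‖ ^ 2) * ∫ x : ℝ, Real.exp (η ^ 2 * x ^ 2) ∂μ :=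
        integral_const_mul _ _
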